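/- If x is obtained from y by a uniform-on-the-right-and-left (URL) progressive transfer, then x can be obtained from y by a finite sequence of Pigou-Dalton progressive transfers. -/

import Mathlib

/-- `x` is obtained from `y` by a Pigou-Dalton progressive transfer. -/
def PigouDalton {n : ℕ} (x y : Fin n → ℝ) : Prop :=
  Monotone x ∧ Monotone y ∧
  ∃ δ : ℝ, 0 < δ ∧ ∃ h k : Fin n, h < k ∧
    x h = y h + δ ∧ x k = y k - δ ∧ ∀ g : Fin n, g ≠ h → g ≠ k → x g = y g

/-- `x` is obtained from `y` by a uniform-on-the-right-and-left (URL)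
progressive transfer. -/
def URLTransfer {n : ℕ} (x y : Fin n → ℝ) : Prop :=
  Monotone x ∧ Monotone y ∧ (∑ i : Fin n, x i) / n = (∑ i : Fin n, y i) / n ∧
  ∃ δ ε : ℝ, 0 < δ ∧ 0 < ε ∧ ∃ h k : Fin n, h < k ∧
    (∀ i : Fin n, i ≤ h → x i = y i + δ) ∧
    (∀ i : Fin n, h < i → i < k → x i = y i) ∧
    (∀ i : Fin n, k ≤ i → x i = y i - ε)

/-- number of units (of size `c`) received so far by the receiver at distance `d` from
the top receiver, after `q` full phases plus `s` extra steps. -/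
def rCnt (b q s d : ℕ) : ℕ := if d < q then b else if d = q then s else 0

/-- number of units given so far by the giver at distance `d` above the bottom giver. -/
def gCnt (q s d : ℕ) : ℕ := q + (if d < s then 1 else 0)

lemma rCnt_antitone (b q s : ℕ) {d d' : ℕ} (hs : s ≤ b) (h : d ≤ d') :
    rCnt b q s d' ≤ rCnt b q s d := by
  simp only [rCnt]; split_ifs <;> omega

lemma gCnt_antitone (q s : ℕ) {d d' : ℕ} (h : d ≤ d') :
    gCnt q s d' ≤ gCnt q s d := by
  simp only [gCnt]; split_ifs <;> omega

lemma rCnt_le (b q s d : ℕ) (hs : s ≤ b) : rCnt b q s d ≤ b := by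
  simp only [rCnt]; split_ifs <;> omega

lemma rCnt_step (b q s d : ℕ) (_hs : s + 1 ≤ b) :
    rCnt b q (s + 1) d = rCnt b q s d + (if d = q then 1 else 0) := by
  simp only [rCnt]; split_ifs <;> omega

lemma rCnt_wrap (b q d : ℕ) (hb : 1 ≤ b) :
    rCnt b (q + 1) 0 d = rCnt b q (b - 1) d + (if d = q then 1 else 0) := by
  simp only [rCnt]; split_ifs <;> omega

lemma gCnt_step (q s d : ℕ) :
    gCnt q (s + 1) d = gCnt q s d + (if d = s then 1 else 0) := by
  simp only [gCnt]; split_ifs <;> omega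

lemma gCnt_wrap (q b d : ℕ) (hd : d ≤ b - 1) :
    gCnt (q + 1) 0 d = gCnt q (b - 1) d + (if d = b - 1 then 1 else 0) := by
  simp only [gCnt]; split_ifs <;> omega

/-- The intermediate distribution after `j` elementary transfers. -/
def chainZ {N : ℕ} (b H K : ℕ) (y : Fin N → ℝ) (c : ℝ) (j : ℕ) (i : Fin N) : ℝ :=
  if i.val ≤ H then y i + (rCnt b (j / b) (j % b) (H - i.val) : ℕ) * c
  else if K ≤ i.val then y i - (gCnt (j / b) (j % b) (i.val - K) : ℕ) * c
  else y i

theorem stmt15 {n : ℕ} (hn : 2 ≤ n) (x y : Fin n → ℝ)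
    (hURL : URLTransfer x y) :
    ∃ (m : ℕ) (z : ℕ → Fin n → ℝ), z 0 = y ∧ z m = x ∧
      ∀ j : ℕ, j < m → PigouDalton (z (j + 1)) (z j) := by
  obtain ⟨m', rfl⟩ : ∃ m', n = m' + 1 := ⟨n - 1, by omega⟩
  obtain ⟨hx, hy, hmean, δ, ε, hδ, hε, h, k, hhk, hle, hmid, hge⟩ := hURL
  set H := h.val with hHdef
  set K := k.val with hKdef
  have hHK : H < K := hhk
  have hKn : K < m' + 1 := k.isLt
  have hHn : H < m' + 1 := h.isLt
  set b := m' + 1 - K with hbdef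
  set a := H + 1 with hadef
  have hfle : ∀ i : Fin (m' + 1), i.val ≤ H → i ≤ h := fun i hi => by
    rw [Fin.le_def, ← hHdef]; exact hi
  have hflt : ∀ i : Fin (m' + 1), H < i.val → h < i := fun i hi => by
    rw [Fin.lt_def, ← hHdef]; exact hi
  have hkle : ∀ i : Fin (m' + 1), K ≤ i.val → k ≤ i := fun i hi => by
    rw [Fin.le_def, ← hKdef]; exact hi
  have hklt : ∀ i : Fin (m' + 1), i.val < K → i < k := fun i hi => by
    rw [Fin.lt_def, ← hKdef]; exact hi
  clear_value H K b a
  have hb : 0 < b := by omega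
  have hbR : (0:ℝ) < (b:ℕ) := by exact_mod_cast hb
  -- derive the sum identity
  have hnR : (0:ℝ) < ((m' + 1 : ℕ) : ℝ) := by positivity
  have hsum : ∑ i : Fin (m' + 1), x i = ∑ i : Fin (m' + 1), y i := by
    have h1 := hmean
    rw [div_eq_div_iff (ne_of_gt hnR) (ne_of_gt hnR)] at h1
    exact mul_right_cancel₀ (ne_of_gt hnR) h1
  have hkey : (a : ℝ) * δ = (b : ℝ) * ε := by
    have e1 : ∀ i : Fin (m' + 1), x i - y i =
        (if i.val ≤ H then δ else 0) + (if K ≤ i.val then -ε else 0) := by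
      intro i
      by_cases h1 : i.val ≤ H
      · rw [hle i (hfle i h1), if_pos h1, if_neg (by omega)]; ring
      · by_cases h2 : K ≤ i.val
        · rw [hge i (hkle i h2), if_neg h1, if_pos h2]; ring
        · rw [hmid i (hflt i (lt_of_not_ge h1)) (hklt i (lt_of_not_ge h2)),
            if_neg h1, if_neg h2]; ring
    have e2 : ∑ i : Fin (m' + 1), (x i - y i) = 0 := by
      rw [Finset.sum_sub_distrib, hsum, sub_self]
    rw [Finset.sum_congr rfl (fun i _ => e1 i), Finset.sum_add_distrib] at e2
    have c1 : ∑ i : Fin (m' + 1), (if i.val ≤ H then δ else (0:ℝ)) = (a : ℕ) * δ := by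
      rw [← Finset.sum_filter]
      have heq : (Finset.univ.filter fun i : Fin (m' + 1) => i.val ≤ H) = Finset.Iic h := by
        ext i
        simp only [Finset.mem_filter, Finset.mem_univ, true_and, Finset.mem_Iic, Fin.le_def]
        rw [hHdef]
      rw [heq, Finset.sum_const, Fin.card_Iic, nsmul_eq_mul, ← hHdef, ← hadef]
    have c2 : ∑ i : Fin (m' + 1), (if K ≤ i.val then -ε else (0:ℝ)) = (b : ℕ) * (-ε) := by
      rw [← Finset.sum_filter]
      have heq : (Finset.univ.filter fun i : Fin (m' + 1) => K ≤ i.val) = Finset.Ici k := by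
        ext i
        simp only [Finset.mem_filter, Finset.mem_univ, true_and, Finset.mem_Ici, Fin.le_def]
        rw [hKdef]
      rw [heq, Finset.sum_const, Fin.card_Ici, nsmul_eq_mul, ← hKdef, ← hbdef]
    rw [c1, c2] at e2
    have e3 : (a : ℝ) * δ - (b : ℝ) * ε = 0 := by linarith [e2]
    linarith
  set c := δ / (b : ℝ) with hcdef
  have hc : 0 < c := div_pos hδ hbR
  have hδc : (b : ℝ) * c = δ := by rw [hcdef]; field_simp
  have hεc : (a : ℝ) * c = ε := by
    rw [hcdef, mul_div_assoc']
    rw [div_eq_iff (ne_of_gt hbR)]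
    linarith [hkey]
  set z : ℕ → Fin (m' + 1) → ℝ := chainZ b H K y c with hzdef
  clear_value z
  -- monotonicity of each intermediate distribution
  have mono : ∀ j, j ≤ a * b → Monotone (z j) := by
    intro j hj
    set q := j / b with hqdef
    set s := j % b with hsdef
    have hqs : b * q + s = j := Nat.div_add_mod j b
    have hs : s < b := Nat.mod_lt _ hb
    have hqa : q ≤ a := by
      have h1 := Nat.div_le_div_right (c := b) hj
      rwa [Nat.mul_div_cancel _ hb] at h1
    have hcase : q < a ∨ (q = a ∧ s = 0) := by
      rcases lt_or_eq_of_le hqa with h1 | h1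
      · exact Or.inl h1
      · right
        refine ⟨h1, ?_⟩
        have h2 : a * b ≤ j := by
          have h3 := Nat.div_mul_le_self j b
          rw [← hqdef, h1] at h3
          omega
        have h3 : j = a * b := le_antisymm hj h2
        rw [hsdef, h3, Nat.mul_mod_left]
    have hgbound : ∀ d, gCnt q s d ≤ a := by
      intro d
      simp only [gCnt]
      rcases hcase with h1 | ⟨h1, h2⟩ <;> split_ifs <;> omega
    -- pointwise bounds
    have hub : ∀ i : Fin (m' + 1), i.val < K → z j i ≤ x i := by
      intro i hi
      by_cases h1 : i.val ≤ H
      · rw [hzdef]; simp only [chainZ, if_pos h1, ← hqdef, ← hsdef]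
        rw [hle i (hfle i h1)]
        have hr : ((rCnt b q s (H - i.val) : ℕ) : ℝ) ≤ (b : ℕ) := by
          exact_mod_cast rCnt_le b q s _ (le_of_lt hs)
        have hr2 := mul_le_mul_of_nonneg_right hr (le_of_lt hc)
        rw [hδc] at hr2
        linarith
      · rw [hzdef]; simp only [chainZ, if_neg h1, if_neg (by omega : ¬ K ≤ i.val)]
        rw [hmid i (hflt i (lt_of_not_ge h1)) (hklt i hi)]
    have hlb : ∀ i : Fin (m' + 1), H < i.val → x i ≤ z j i := by
      intro i hi
      by_cases h2 : K ≤ i.val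
      · rw [hzdef]; simp only [chainZ, if_neg (by omega : ¬ i.val ≤ H), if_pos h2,
          ← hqdef, ← hsdef]
        rw [hge i (hkle i h2)]
        have hg : ((gCnt q s (i.val - K) : ℕ) : ℝ) ≤ (a : ℕ) := by
          exact_mod_cast hgbound _
        have hg2 := mul_le_mul_of_nonneg_right hg (le_of_lt hc)
        rw [hεc] at hg2
        linarith
      · rw [hzdef]; simp only [chainZ, if_neg (by omega : ¬ i.val ≤ H), if_neg h2]
        rw [hmid i (hflt i hi) (hklt i (lt_of_not_ge h2))]
    rw [Fin.monotone_iff_le_succ]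
    intro i
    set v := (i.castSucc : Fin (m' + 1)).val with hvdef
    have hv1 : (i.succ : Fin (m' + 1)).val = v + 1 := by simp [hvdef]
    by_cases hA : v + 1 ≤ H
    · -- both in the receiver region
      have hr : rCnt b q s (H - v) ≤ rCnt b q s (H - (v + 1)) :=
        rCnt_antitone b q s (le_of_lt hs) (by omega)
      have hyle : y i.castSucc ≤ y i.succ := hy (le_of_lt (Fin.castSucc_lt_succ : i.castSucc < i.succ))
      have hmn : ((rCnt b q s (H - v) : ℕ) : ℝ) * c ≤ ((rCnt b q s (H - (v+1)) : ℕ) : ℝ) * c :=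
        mul_le_mul_of_nonneg_right (by exact_mod_cast hr) (le_of_lt hc)
      calc z j i.castSucc = y i.castSucc + ((rCnt b q s (H - v) : ℕ) : ℝ) * c := by
            rw [hzdef]; simp only [chainZ, ← hvdef, if_pos (by omega : v ≤ H), ← hqdef, ← hsdef]
        _ ≤ y i.succ + ((rCnt b q s (H - (v+1)) : ℕ) : ℝ) * c := add_le_add hyle hmn
        _ = z j i.succ := by
            rw [hzdef]; simp only [chainZ, hv1, if_pos hA, ← hqdef, ← hsdef]
    · by_cases hB : K ≤ v
      · -- both in the giver region
        have hg : gCnt q s (v + 1 - K) ≤ gCnt q s (v - K) :=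
          gCnt_antitone q s (by omega)
        have hyle : y i.castSucc ≤ y i.succ := hy (le_of_lt (Fin.castSucc_lt_succ : i.castSucc < i.succ))
        have hmn : ((gCnt q s (v + 1 - K) : ℕ) : ℝ) * c ≤ ((gCnt q s (v - K) : ℕ) : ℝ) * c :=
          mul_le_mul_of_nonneg_right (by exact_mod_cast hg) (le_of_lt hc)
        calc z j i.castSucc = y i.castSucc - ((gCnt q s (v - K) : ℕ) : ℝ) * c := by
              rw [hzdef]; simp only [chainZ, ← hvdef, if_neg (by omega : ¬ v ≤ H), if_pos hB,
                ← hqdef, ← hsdef]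
          _ ≤ y i.succ - ((gCnt q s (v + 1 - K) : ℕ) : ℝ) * c := by linarith
          _ = z j i.succ := by
              rw [hzdef]; simp only [chainZ, hv1, if_neg (by omega : ¬ v + 1 ≤ H),
                if_pos (by omega : K ≤ v + 1), ← hqdef, ← hsdef]
      · -- straddling the middle
        have h1 : z j i.castSucc ≤ x i.castSucc := hub _ (by omega)
        have h2 : x i.succ ≤ z j i.succ := by
          apply hlb
          rw [hv1]
          omega
        have h3 : x i.castSucc ≤ x i.succ := hx (le_of_lt (Fin.castSucc_lt_succ : i.castSucc < i.succ))
        linarith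
  refine ⟨a * b, z, ?_, ?_, ?_⟩
  · -- z 0 = y
    funext i
    rw [hzdef]
    simp only [chainZ, Nat.zero_div, Nat.zero_mod]
    have hr : rCnt b 0 0 (H - i.val) = 0 := by simp [rCnt]
    have hg : gCnt 0 0 (i.val - K) = 0 := by simp [gCnt]
    rw [hr, hg]
    split_ifs <;> simp
  · -- z (a*b) = x
    funext i
    have hq : (a * b) / b = a := Nat.mul_div_cancel _ hb
    have hs : (a * b) % b = 0 := Nat.mul_mod_left _ _
    rw [hzdef]
    simp only [chainZ, hq, hs]
    by_cases h1 : i.val ≤ H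
    · rw [if_pos h1]
      have hr : rCnt b a 0 (H - i.val) = b := by
        simp only [rCnt]
        split_ifs <;> omega
      rw [hr, hδc, ← hle i (hfle i h1)]
    · by_cases h2 : K ≤ i.val
      · rw [if_neg h1, if_pos h2]
        have hg : gCnt a 0 (i.val - K) = a := by simp [gCnt]
        rw [hg, hεc, ← hge i (hkle i h2)]
      · rw [if_neg h1, if_neg h2]
        exact (hmid i (hflt i (lt_of_not_ge h1)) (hklt i (lt_of_not_ge h2))).symm
  · -- each step is a Pigou-Dalton transfer
    intro j hj
    set q := j / b with hqdef
    set s := j % b with hsdef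
    have hqs : b * q + s = j := Nat.div_add_mod j b
    have hs : s < b := Nat.mod_lt _ hb
    have hq : q < a := by rw [hqdef, Nat.div_lt_iff_lt_mul hb]; exact hj
    clear_value q s
    have hexp : b * (q + 1) = b * q + b := by ring
    -- increments for step j → j+1
    have er : ∀ d, rCnt b ((j+1)/b) ((j+1)%b) d = rCnt b q s d + (if d = q then 1 else 0) := by
      intro d
      by_cases hsb : s + 1 < b
      · have h1 : (j + 1) / b = q ∧ (j + 1) % b = s + 1 :=
          (Nat.div_mod_unique hb).2 ⟨by omega, hsb⟩
        rw [h1.1, h1.2, rCnt_step b q s d (by omega)]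
      · have h1 : (j + 1) / b = q + 1 ∧ (j + 1) % b = 0 :=
          (Nat.div_mod_unique hb).2 ⟨by omega, hb⟩
        rw [h1.1, h1.2, rCnt_wrap b q d hb, (by omega : b - 1 = s)]
    have eg : ∀ d, d < b →
        gCnt ((j+1)/b) ((j+1)%b) d = gCnt q s d + (if d = s then 1 else 0) := by
      intro d hd
      by_cases hsb : s + 1 < b
      · have h1 : (j + 1) / b = q ∧ (j + 1) % b = s + 1 :=
          (Nat.div_mod_unique hb).2 ⟨by omega, hsb⟩
        rw [h1.1, h1.2, gCnt_step q s d]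
      · have h1 : (j + 1) / b = q + 1 ∧ (j + 1) % b = 0 :=
          (Nat.div_mod_unique hb).2 ⟨by omega, hb⟩
        rw [h1.1, h1.2, gCnt_wrap q b d (by omega), (by omega : b - 1 = s)]
    refine ⟨mono (j+1) (by omega), mono j (by omega), c, hc,
      ⟨H - q, by omega⟩, ⟨K + s, by omega⟩, by rw [Fin.lt_def]; simp; omega, ?_, ?_, ?_⟩
    · -- receiver
      rw [hzdef]
      simp only [chainZ, if_pos (by omega : H - q ≤ H)]
      rw [er, if_pos (by omega : H - (H - q) = q)]
      simp only [← hqdef, ← hsdef]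
      push_cast
      ring
    · -- giver
      rw [hzdef]
      simp only [chainZ, if_neg (by omega : ¬ K + s ≤ H),
        if_pos (by omega : K ≤ K + s)]
      rw [eg _ (by omega), if_pos (by omega : K + s - K = s)]
      simp only [← hqdef, ← hsdef]
      push_cast
      ring
    · -- others unchanged
      intro g hg1 hg2
      have hg1' : g.val ≠ H - q := fun hcc => hg1 (Fin.ext hcc)
      have hg2' : g.val ≠ K + s := fun hcc => hg2 (Fin.ext hcc)
      rw [hzdef]
      by_cases h1 : g.val ≤ H
      · simp only [chainZ, if_pos h1]
        rw [er, if_neg (by omega : ¬ H - g.val = q), ← hqdef, ← hsdef]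
        push_cast; ring
      · by_cases h2 : K ≤ g.val
        · simp only [chainZ, if_neg h1, if_pos h2]
          rw [eg _ (by omega), if_neg (by omega : ¬ g.val - K = s), ← hqdef, ← hsdef]
          push_cast; ring
        · simp only [chainZ, if_neg h1, if_neg h2]
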